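/- arXiv:2104.08616 — 2 statements merged into one kernel-verified Lean document; each statement's English description precedes it below -/
import Mathlib

section
/- Let G be an edge-periodic graph on n vertices with global period LCM. If the cop has a winning strategy in the cops-and-robber game on G, then the cop has a strategy catching the robber within n^2 * LCM rounds, regardless of the robber's play. -/
namespace EPG

/-- Presence of the edge `{u,v}` at time `t`: the binary string `τ u v` (the empty
string encodes a non-edge) has a `1` at position `t mod |τ u v|`. -/
def present {V : Type*} (τ : V → V → List Bool) (u v : V) (t : ℕ) : Prop :=
  (τ u v).getD (t % (τ u v).length) false = true

/-- A legal move at time `t`: stay, or cross an edge present at time `t`. -/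
def moveOK {V : Type*} (τ : V → V → List Bool) (t : ℕ) (u v : V) : Prop :=
  v = u ∨ present τ u v t

/-- A (Markov) strategy: given the time and both current positions, produce the
mover's next vertex. -/
abbrev Strat (V : Type*) := ℕ → V → V → V

/-- A cop strategy is valid if it always prescribes legal moves. -/
def copValid {V : Type*} (τ : V → V → List Bool) (σ : Strat V) : Prop :=
  ∀ t u r, moveOK τ t u (σ t u r)

/-- A robber strategy is valid if it always prescribes legal moves. -/
def robValid {V : Type*} (τ : V → V → List Bool) (σ : Strat V) : Prop :=
  ∀ t c r, moveOK τ t r (σ t c r)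

/-- The pair of positions (cop, robber) at the beginning of round `t`, given start
vertices `c0, r0` and strategies `σc, σr`; in each round the cop moves first,
then the robber (seeing the cop's new position). -/
def pos {V : Type*} (σc σr : Strat V) (c0 r0 : V) : ℕ → V × V
  | 0 => (c0, r0)
  | t + 1 =>
      let p := pos σc σr c0 r0 t
      let c' := σc t p.1 p.2
      (c', σr t c' p.2)

/-- The cop catches the robber within the first `N` rounds: either the robber starts
on the cop's vertex, or in some round `t < N` the cop's move lands on the robber. -/
def caughtBy {V : Type*} (σc σr : Strat V) (c0 r0 : V) (N : ℕ) : Prop :=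
  c0 = r0 ∨ ∃ t < N,
    σc t (pos σc σr c0 r0 t).1 (pos σc σr c0 r0 t).2 = (pos σc σr c0 r0 t).2

/-- The cop eventually catches the robber. -/
def caught {V : Type*} (σc σr : Strat V) (c0 r0 : V) : Prop :=
  c0 = r0 ∨ ∃ t,
    σc t (pos σc σr c0 r0 t).1 (pos σc σr c0 r0 t).2 = (pos σc σr c0 r0 t).2

/-- The edge-periodic graph is cop-winning: the cop has a start vertex and a valid
strategy catching every robber. -/
def copWinning {V : Type*} (τ : V → V → List Bool) : Prop :=
  ∃ c0 σc, copValid τ σc ∧ ∀ r0 σr, robValid τ σr → caught σc σr c0 r0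

/-- The edge-periodic graph is robber-winning: against every cop start vertex and valid
cop strategy, the robber has a start vertex and valid strategy evading forever. -/
def robberWinning {V : Type*} (τ : V → V → List Bool) : Prop :=
  ∀ c0 σc, copValid τ σc → ∃ r0 σr, robValid τ σr ∧ ¬ caught σc σr c0 r0

/-- The least common multiple of the lengths of the edge strings. -/
def lcmLen {V : Type*} [Fintype V] [DecidableEq V] (τ : V → V → List Bool) : ℕ :=
  ((Finset.univ : Finset (V × V)).filter fun p => τ p.1 p.2 ≠ []).lcm
    fun p => (τ p.1 p.2).length

end EPG

namespace EPG

/-- `Win τ L k c r m`: with cop at `c`, robber at `r`, at time ≡ `m` mod `L`,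
cop to move, the cop can force a catch within `k` moves. -/
def Win {V : Type*} (τ : V → V → List Bool) (L : ℕ) : ℕ → V → V → ℕ → Prop
  | 0 => fun _ _ _ => False
  | k + 1 => fun c r m => ∃ c', moveOK τ m c c' ∧
      (c' = r ∨ ∀ r', moveOK τ m r r' → Win τ L k c' r' ((m + 1) % L))

theorem win_zero {V : Type*} (τ : V → V → List Bool) (L : ℕ) (c r : V) (m : ℕ) :
    ¬ Win τ L 0 c r m := fun h => h

theorem win_succ_iff {V : Type*} (τ : V → V → List Bool) (L k : ℕ) (c r : V) (m : ℕ) :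
    Win τ L (k + 1) c r m ↔ ∃ c', moveOK τ m c c' ∧
      (c' = r ∨ ∀ r', moveOK τ m r r' → Win τ L k c' r' ((m + 1) % L)) := Iff.rfl

theorem win_succ_of {V : Type*} {τ : V → V → List Bool} {L k : ℕ} {c r : V} {m : ℕ}
    (h : Win τ L k c r m) : Win τ L (k + 1) c r m := by
  induction k generalizing c r m with
  | zero => exact h.elim
  | succ k ih =>
    obtain ⟨c', h1, h2⟩ := h
    exact ⟨c', h1, h2.imp id fun hall r' hr' => ih (hall r' hr')⟩

theorem win_mono {V : Type*} {τ : V → V → List Bool} {L k j : ℕ} {c r : V} {m : ℕ}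
    (hkj : k ≤ j) (h : Win τ L k c r m) : Win τ L j c r m := by
  induction j with
  | zero => exact Nat.le_zero.mp hkj ▸ h
  | succ j ih =>
    rcases Nat.lt_or_ge k (j + 1) with h' | h'
    · exact win_succ_of (ih (by omega))
    · have : k = j + 1 := by omega
      exact this ▸ h

theorem present_mod {V : Type*} {τ : V → V → List Bool} {L : ℕ}
    (hdvd : ∀ u v, τ u v ≠ [] → (τ u v).length ∣ L) (u v : V) (t : ℕ) :
    present τ u v (t % L) ↔ present τ u v t := by
  unfold present
  by_cases h : τ u v = []
  · simp [h]
  · rw [Nat.mod_mod_of_dvd _ (hdvd u v h)]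

theorem moveOK_mod {V : Type*} {τ : V → V → List Bool} {L : ℕ}
    (hdvd : ∀ u v, τ u v ≠ [] → (τ u v).length ∣ L) (t : ℕ) (u v : V) :
    moveOK τ (t % L) u v ↔ moveOK τ t u v :=
  or_congr Iff.rfl (present_mod hdvd u v t)

theorem mod_succ_mod (t L : ℕ) : (t % L + 1) % L = (t + 1) % L := by
  rw [Nat.add_mod (t % L) 1 L, Nat.mod_mod_of_dvd t (dvd_refl L), ← Nat.add_mod]

/-- The evading robber strategy: move to keep the configuration outside
the cop's winning region. -/
noncomputable def escStrat {V : Type*} (τ : V → V → List Bool) (L : ℕ) : Strat V :=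
  fun t c r =>
  @dite _ (∃ r', moveOK τ t r r' ∧ ¬ ∃ k, Win τ L k c r' ((t + 1) % L))
    (Classical.propDecidable _) (fun h => h.choose) (fun _ => r)

theorem escStrat_valid {V : Type*} (τ : V → V → List Bool) (L : ℕ) :
    robValid τ (escStrat τ L) := by
  intro t c r
  unfold escStrat
  split
  · next h => exact h.choose_spec.1
  · exact Or.inl rfl

theorem esc_step {V : Type*} [Fintype V] {τ : V → V → List Bool} {L : ℕ}
    (hdvd : ∀ u v, τ u v ≠ [] → (τ u v).length ∣ L)
    {σc : Strat V} (hσc : copValid τ σc) (t : ℕ) (c r : V)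
    (hW : ¬ ∃ k, Win τ L k c r (t % L)) :
    σc t c r ≠ r ∧
      ¬ ∃ k, Win τ L k (σc t c r) (escStrat τ L t (σc t c r) r) ((t + 1) % L) := by
  set c' := σc t c r with hc'
  have hmov : moveOK τ t c c' := hσc t c r
  have hmovm : moveOK τ (t % L) c c' := (moveOK_mod hdvd t c c').mpr hmov
  have hne : c' ≠ r := by
    intro he
    exact hW ⟨1, c', hmovm, Or.inl he⟩
  refine ⟨hne, ?_⟩
  have hex : ∃ r', moveOK τ t r r' ∧ ¬ ∃ k, Win τ L k c' r' ((t + 1) % L) := by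
    by_contra hno
    push_neg at hno
    have hch : ∀ r' : V, ∃ k, moveOK τ t r r' → Win τ L k c' r' ((t + 1) % L) := by
      intro r'
      by_cases hm : moveOK τ t r r'
      · obtain ⟨k, hk⟩ := hno r' hm
        exact ⟨k, fun _ => hk⟩
      · exact ⟨0, fun h => absurd h hm⟩
    choose g hg using hch
    set K := Finset.univ.sup g with hK
    apply hW
    refine ⟨K + 1, c', hmovm, Or.inr ?_⟩
    intro r' hr'
    have hr't : moveOK τ t r r' := (moveOK_mod hdvd t r r').mp hr'
    rw [mod_succ_mod]
    exact win_mono (Finset.le_sup (Finset.mem_univ r')) (hg r' hr't)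
  have heq : escStrat τ L t c' r = hex.choose := by
    unfold escStrat
    rw [dif_pos hex]
  rw [heq]
  exact hex.choose_spec.2

theorem esc_evades {V : Type*} [Fintype V] {τ : V → V → List Bool} {L : ℕ}
    (hdvd : ∀ u v, τ u v ≠ [] → (τ u v).length ∣ L)
    {σc : Strat V} (hσc : copValid τ σc) (c0 r0 : V)
    (h0 : ¬ ∃ k, Win τ L k c0 r0 (0 % L)) :
    ¬ caught σc (escStrat τ L) c0 r0 := by
  have key : ∀ t, ¬ ∃ k, Win τ L k (pos σc (escStrat τ L) c0 r0 t).1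
      (pos σc (escStrat τ L) c0 r0 t).2 (t % L) := by
    intro t
    induction t with
    | zero => exact h0
    | succ t ih =>
      have := (esc_step hdvd hσc t (pos σc (escStrat τ L) c0 r0 t).1
          (pos σc (escStrat τ L) c0 r0 t).2 ih).2
      simpa [pos] using this
  intro hc
  rcases hc with hc | ⟨t, ht⟩
  · exact h0 ⟨1, c0, Or.inl rfl, Or.inl hc⟩
  · exact (esc_step hdvd hσc t _ _ (key t)).1 ht

/-- Extraction lemma for a winning move. -/
theorem win_elim {V : Type*} {τ : V → V → List Bool} {L k : ℕ} {c r : V} {m : ℕ}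
    (h : Win τ L k c r m) : ∃ c', moveOK τ m c c' ∧
      (c' = r ∨ ∀ r', moveOK τ m r r' → Win τ L (k - 1) c' r' ((m + 1) % L)) := by
  cases k with
  | zero => exact h.elim
  | succ k => exact h

/-- The rank-decreasing cop strategy. -/
noncomputable def copStrat {V : Type*} (τ : V → V → List Bool) (L : ℕ) : Strat V :=
  fun t c r =>
  @dite _ (∃ k, Win τ L k c r (t % L)) (Classical.propDecidable _)
    (fun h => (win_elim (show Win τ L (sInf {k | Win τ L k c r (t % L)}) c r (t % L) from
      Nat.sInf_mem h)).choose)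
    (fun _ => c)

theorem copStrat_valid {V : Type*} {τ : V → V → List Bool} {L : ℕ}
    (hdvd : ∀ u v, τ u v ≠ [] → (τ u v).length ∣ L) :
    copValid τ (copStrat τ L) := by
  intro t c r
  unfold copStrat
  split
  · next h =>
    exact (moveOK_mod hdvd t c _).mp
      (win_elim (show Win τ L (sInf {k | Win τ L k c r (t % L)}) c r (t % L) from
        Nat.sInf_mem h)).choose_spec.1
  · exact Or.inl rfl

theorem copStrat_catches {V : Type*} {τ : V → V → List Bool} {L : ℕ}
    (hdvd : ∀ u v, τ u v ≠ [] → (τ u v).length ∣ L)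
    {σr : Strat V} (hσr : robValid τ σr) (c0 r0 : V) :
    ∀ k t, Win τ L k (pos (copStrat τ L) σr c0 r0 t).1 (pos (copStrat τ L) σr c0 r0 t).2
        (t % L) →
      ∃ s, t ≤ s ∧ s < t + k ∧
        copStrat τ L s (pos (copStrat τ L) σr c0 r0 s).1 (pos (copStrat τ L) σr c0 r0 s).2
          = (pos (copStrat τ L) σr c0 r0 s).2 := by
  classical
  intro k
  induction k with
  | zero => intro t h; exact h.elim
  | succ k ih =>
    intro t h
    set p := pos (copStrat τ L) σr c0 r0 t with hp
    have hW : ∃ j, Win τ L j p.1 p.2 (t % L) := ⟨k + 1, h⟩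
    set i := sInf {j | Win τ L j p.1 p.2 (t % L)} with hi
    have hwini : Win τ L i p.1 p.2 (t % L) := Nat.sInf_mem hW
    have hfind : i ≤ k + 1 := Nat.sInf_le h
    have hcs : copStrat τ L t p.1 p.2 = (win_elim (show Win τ L i p.1 p.2 (t % L) from
        Nat.sInf_mem hW)).choose := by
      unfold copStrat
      rw [dif_pos hW]
    obtain ⟨hmov, hor⟩ := (win_elim (show Win τ L i p.1 p.2 (t % L) from
        Nat.sInf_mem hW)).choose_spec
    set c' := (win_elim (show Win τ L i p.1 p.2 (t % L) from
        Nat.sInf_mem hW)).choose with hc'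
    rcases hor with hcatch | hall
    · exact ⟨t, le_refl t, by omega, by rw [hcs]; exact hcatch⟩
    · have hr : moveOK τ (t % L) p.2 (σr t c' p.2) :=
        (moveOK_mod hdvd t p.2 _).mpr (hσr t c' p.2)
      have hwin' : Win τ L (i - 1) c' (σr t c' p.2) ((t + 1) % L) := by
        rw [← mod_succ_mod]
        exact hall _ hr
      have hpos : pos (copStrat τ L) σr c0 r0 (t + 1) = (c', σr t c' p.2) := by
        simp only [pos, ← hp, hcs]
      have hwin'' : Win τ L k (pos (copStrat τ L) σr c0 r0 (t + 1)).1
          (pos (copStrat τ L) σr c0 r0 (t + 1)).2 ((t + 1) % L) := by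
        rw [hpos]
        exact win_mono (by omega) hwin'
      obtain ⟨s, hs1, hs2, hs3⟩ := ih (t + 1) hwin''
      exact ⟨s, by omega, by omega, hs3⟩

theorem win_bound {V : Type*} [Fintype V] [DecidableEq V] {τ : V → V → List Bool} {L : ℕ}
    (hL0 : 0 < L) :
    ∀ k (c r : V) (m : ℕ), m < L → Win τ L k c r m →
      Win τ L (Fintype.card V * Fintype.card V * L) c r m := by
  classical
  set N := Fintype.card V * Fintype.card V * L with hN
  set f : ℕ → Finset (V × V × Fin L) :=
    fun k => Finset.univ.filter (fun q => Win τ L k q.1 q.2.1 (q.2.2 : ℕ)) with hf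
  have fmono : ∀ k, f k ⊆ f (k + 1) := by
    intro k q hq
    simp only [hf, Finset.mem_filter, Finset.mem_univ, true_and] at hq ⊢
    exact win_succ_of hq
  have hstab : ∃ k ≤ N, f k = f (k + 1) := by
    by_contra hno
    push_neg at hno
    have grow : ∀ k, k ≤ N + 1 → k ≤ (f k).card := by
      intro k
      induction k with
      | zero => intro; exact Nat.zero_le _
      | succ k ih =>
        intro hk
        have h1 := ih (by omega)
        have hss : f k ⊂ f (k + 1) :=
          HasSubset.Subset.ssubset_of_ne (fmono k) (hno k (by omega))
        have := Finset.card_lt_card hss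
        omega
    have h1 := grow (N + 1) le_rfl
    have h2 : (f (N + 1)).card ≤ N := by
      calc (f (N + 1)).card ≤ (Finset.univ : Finset (V × V × Fin L)).card :=
            Finset.card_le_card (Finset.subset_univ _)
        _ = N := by
            simp [Finset.card_univ, hN]
            ring
    omega
  obtain ⟨k0, hk0, heq⟩ := hstab
  have pointEq : ∀ (c r : V) (m : ℕ), m < L → Win τ L (k0 + 1) c r m → Win τ L k0 c r m := by
    intro c r m hm hw
    have hmem : (c, r, (⟨m, hm⟩ : Fin L)) ∈ f (k0 + 1) := by
      simp only [hf, Finset.mem_filter, Finset.mem_univ, true_and]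
      exact hw
    rw [← heq] at hmem
    simpa only [hf, Finset.mem_filter, Finset.mem_univ, true_and] using hmem
  have reduce : ∀ j (c r : V) (m : ℕ), m < L → Win τ L (k0 + j) c r m → Win τ L k0 c r m := by
    intro j
    induction j with
    | zero => intro c r m _ h; exact h
    | succ j ih =>
      intro c r m hm hw
      obtain ⟨c', hmov, hor⟩ := (show Win τ L (k0 + j + 1) c r m from by
        rwa [show k0 + (j + 1) = k0 + j + 1 from rfl] at hw)
      apply pointEq c r m hm
      refine ⟨c', hmov, hor.imp id fun hall r' hr' => ?_⟩
      exact ih c' r' ((m + 1) % L) (Nat.mod_lt _ hL0) (hall r' hr')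
  intro k c r m hm hw
  rcases le_or_gt k N with hk | hk
  · exact win_mono hk hw
  · have : Win τ L (k0 + (k - k0)) c r m := by
      rwa [show k0 + (k - k0) = k from by omega]
    exact win_mono hk0 (reduce (k - k0) c r m hm this)

end EPG


open EPG in
/-- If a cop-winning edge-periodic graph on `n` vertices with global period `LCM`
is cop-winning, then the cop has a valid strategy catching the robber within
`n^2 * LCM` rounds, regardless of the robber's play. -/
theorem stmt_7 {V : Type*} [Fintype V] [DecidableEq V] (τ : V → V → List Bool)
    (hsymm : ∀ u v, τ u v = τ v u)
    (hwf : ∀ u v, τ u v ≠ [] → true ∈ τ u v)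
    (n L : ℕ) (hn : n = Fintype.card V) (hL : L = lcmLen τ)
    (hwin : copWinning τ) :
    ∃ c0 σc, copValid τ σc ∧
      ∀ r0 σr, robValid τ σr → caughtBy σc σr c0 r0 (n ^ 2 * L) := by
  classical
  obtain ⟨c0, σc0, hσc0, hcatch0⟩ := hwin
  have hdvd : ∀ u v, τ u v ≠ [] → (τ u v).length ∣ L := by
    intro u v h
    rw [hL, lcmLen]
    exact Finset.dvd_lcm (Finset.mem_filter.mpr ⟨Finset.mem_univ (u, v), h⟩)
  have hL0 : 0 < L := by
    rw [hL, lcmLen]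
    rw [Nat.pos_iff_ne_zero, Ne, Finset.lcm_eq_zero_iff]
    rintro ⟨⟨u, v⟩, hm, h0⟩
    simp only [Finset.mem_filter, Finset.coe_filter, Set.mem_setOf_eq] at hm
    have h0' : (τ u v).length = 0 := h0
    exact hm.2 (List.length_eq_zero_iff.mp h0')
  have hWall : ∀ r0 : V, ∃ k, Win τ L k c0 r0 0 := by
    intro r0
    by_contra h0
    have h0' : ¬ ∃ k, Win τ L k c0 r0 (0 % L) := by rwa [Nat.zero_mod]
    exact esc_evades hdvd hσc0 c0 r0 h0'
      (hcatch0 r0 (escStrat τ L) (escStrat_valid τ L))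
  refine ⟨c0, copStrat τ L, copStrat_valid hdvd, ?_⟩
  intro r0 σr hσr
  by_cases hcr : c0 = r0
  · exact Or.inl hcr
  obtain ⟨k, hWk⟩ := hWall r0
  have hW' : Win τ L (Fintype.card V * Fintype.card V * L) c0 r0 0 :=
    win_bound hL0 k c0 r0 0 hL0 hWk
  have hW0 : Win τ L (Fintype.card V * Fintype.card V * L)
      (pos (copStrat τ L) σr c0 r0 0).1 (pos (copStrat τ L) σr c0 r0 0).2 (0 % L) := by
    rw [Nat.zero_mod]
    exact hW'
  obtain ⟨s, _, hs2, hs3⟩ := copStrat_catches hdvd hσr c0 r0 _ 0 hW0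
  refine Or.inr ⟨s, ?_, hs3⟩
  have : n ^ 2 * L = Fintype.card V * Fintype.card V * L := by
    rw [hn]; ring
  omega
end

section
/- Let x_j be a binary string and τ_j = ξ(x_j[0])·...·ξ(x_j[|x_j|−1]) with ξ(c) = c^m 0 1^(m+1) and q = 2m+2. Then for every time t: (1) if t mod q ≤ m−1 then τ_j[t mod |τ_j|] = x_j[⌊t/q⌋ mod |x_j|]; (2) if t mod q = m then τ_j[t mod |τ_j|] = 0; (3) if t mod q ≥ m+1 then τ_j[t mod |τ_j|] = 1. -/
/-- The gadget block `ξ(c) = c^m 0 1^(m+1)` of length `q = 2m+2`. -/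
def xiBlock (m : ℕ) (c : Bool) : List Bool :=
  List.replicate m c ++ [false] ++ List.replicate (m + 1) true

/-- The block encoding `ξ(x[0]) ⋯ ξ(x[|x|-1])` of a binary string `x`. -/
def encode (m : ℕ) (x : List Bool) : List Bool := (x.map (xiBlock m)).flatten

lemma xiBlock_length (m : ℕ) (c : Bool) : (xiBlock m c).length = 2 * m + 2 := by
  simp [xiBlock]; omega

lemma encode_length (m : ℕ) (x : List Bool) :
    (encode m x).length = (2 * m + 2) * x.length := by
  induction x with
  | nil => simp [encode]
  | cons a l ih =>
    simp [encode, List.flatten_cons, xiBlock_length] at *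
    simp [ih]; ring

lemma encode_getD (m : ℕ) (x : List Bool) (i r : ℕ) (hi : i < x.length)
    (hr : r < 2 * m + 2) :
    (encode m x).getD ((2 * m + 2) * i + r) false
      = (xiBlock m (x.getD i false)).getD r false := by
  induction x generalizing i with
  | nil => simp at hi
  | cons a l ih =>
    cases i with
    | zero =>
      simp only [encode, List.map_cons, List.flatten_cons, Nat.mul_zero, Nat.zero_add]
      rw [List.getD_eq_getElem?_getD, List.getElem?_append_left (by rw [xiBlock_length]; omega)]
      simp [List.getD_eq_getElem?_getD]
    | succ i =>
      simp only [encode, List.map_cons, List.flatten_cons]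
      rw [List.getD_eq_getElem?_getD, List.getElem?_append_right (by rw [xiBlock_length]; nlinarith)]
      rw [xiBlock_length]
      have : (2 * m + 2) * (i + 1) + r - (2 * m + 2) = (2 * m + 2) * i + r := by ring_nf; omega
      rw [this, ← List.getD_eq_getElem?_getD]
      have := ih i (by simpa using hi)
      simpa [encode] using this

lemma xiBlock_getD_lt (m : ℕ) (c : Bool) (r : ℕ) (hr : r < m) :
    (xiBlock m c).getD r false = c := by
  rw [xiBlock, List.getD_eq_getElem?_getD, List.getElem?_append_left (by simp; omega),
    List.getElem?_append_left (by simp; omega)]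
  simp [List.getElem?_replicate, hr]

lemma xiBlock_getD_eq (m : ℕ) (c : Bool) :
    (xiBlock m c).getD m false = false := by
  rw [xiBlock, List.getD_eq_getElem?_getD, List.getElem?_append_left (by simp),
    List.getElem?_append_right (by simp)]
  simp

lemma xiBlock_getD_ge (m : ℕ) (c : Bool) (r : ℕ) (hr : m + 1 ≤ r) (hr2 : r < 2 * m + 2) :
    (xiBlock m c).getD r false = true := by
  rw [xiBlock, List.getD_eq_getElem?_getD, List.getElem?_append_right (by simp; omega)]
  simp [List.getElem?_replicate]
  have : r - (m + 1) < m + 1 := by omega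
  simp [show r ≤ m + (m + 1) by omega]

lemma mod_mul_decomp (a b t : ℕ) (ha : 0 < a) (hb : 0 < b) :
    t % (a * b) = a * (t / a % b) + t % a := by
  conv_lhs => rw [← Nat.div_add_mod t a]
  rw [Nat.add_mod, Nat.mul_mod_mul_left]
  have h1 : a * (t / a % b) + t % a % (a * b) < a * b := by
    have := Nat.mod_lt (t / a) hb
    have := Nat.mod_lt t ha
    have : t % a % (a * b) ≤ t % a := Nat.mod_le _ _
    nlinarith [Nat.mod_lt (t / a) hb, Nat.mod_lt t ha]
  rw [Nat.mod_eq_of_lt h1]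
  congr 1
  exact Nat.mod_eq_of_lt (lt_of_lt_of_le (Nat.mod_lt t ha) (Nat.le_mul_of_pos_right a hb))

/-- Block-encoding correctness for the directed-cycle reduction (`q = 2m+2`): at any
time `t`, reading `τ_j = encode m x_j` cyclically gives `x_j[⌊t/q⌋ mod |x_j|]` if
`t mod q ≤ m−1`, gives `0` if `t mod q = m`, and gives `1` if `t mod q ≥ m+1`. -/
theorem stmt_15 (m : ℕ) (x : List Bool) (hx : x ≠ []) (t : ℕ) :
    (t % (2 * m + 2) < m →
      (encode m x).getD (t % (encode m x).length) false =
        x.getD ((t / (2 * m + 2)) % x.length) false) ∧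
    (t % (2 * m + 2) = m →
      (encode m x).getD (t % (encode m x).length) false = false) ∧
    (m + 1 ≤ t % (2 * m + 2) →
      (encode m x).getD (t % (encode m x).length) false = true) := by
  have hxl : 0 < x.length := List.length_pos_iff.mpr hx
  have hdecomp : t % (encode m x).length
      = (2 * m + 2) * (t / (2 * m + 2) % x.length) + t % (2 * m + 2) := by
    rw [encode_length]
    exact mod_mul_decomp (2 * m + 2) x.length t (by omega) hxl
  have hi : t / (2 * m + 2) % x.length < x.length := Nat.mod_lt _ hxl
  have hr : t % (2 * m + 2) < 2 * m + 2 := Nat.mod_lt _ (by omega)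
  rw [hdecomp, encode_getD m x _ _ hi hr]
  refine ⟨fun h => xiBlock_getD_lt _ _ _ h, fun h => ?_, fun h => xiBlock_getD_ge _ _ _ h hr⟩
  rw [h]; exact xiBlock_getD_eq _ _
end
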